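/- The graph Γ_E(R) is connected and has diameter at most 3. -/

import Mathlib

open scoped Classical

noncomputable section

/-- The annihilator ideal of an element `x` of a commutative ring `R`. -/
def ann (R : Type*) [CommRing R] (x : R) : Ideal R := Ideal.torsionOf R R x

/-- The type of nonzero zero divisors of `R`. -/
def ZD (R : Type*) [CommRing R] : Type _ :=
  {x : R // x ≠ 0 ∧ ∃ y : R, y ≠ 0 ∧ x * y = 0}

/-- Two zero divisors are equivalent iff they have the same annihilator. -/
instance annSetoid (R : Type*) [CommRing R] : Setoid (ZD R) :=
  ⟨fun a b => ann R a.1 = ann R b.1,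
   fun _ => rfl, Eq.symm, Eq.trans⟩

/-- The vertex set of `Γ_E(R)`: equivalence classes of nonzero zero divisors. -/
def GammaEV (R : Type*) [CommRing R] : Type _ := Quotient (annSetoid R)

/-- The class of a nonzero zero divisor. -/
def cls (R : Type*) [CommRing R] (a : ZD R) : GammaEV R :=
  Quotient.mk (annSetoid R) a

/-- The graph `Γ_E(R)` of equivalence classes of zero divisors. -/
def gammaE (R : Type*) [CommRing R] : SimpleGraph (GammaEV R) where
  Adj u v := u ≠ v ∧ ∃ a b : ZD R, cls R a = u ∧ cls R b = v ∧ a.1 * b.1 = 0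
  symm := by
    constructor
    rintro u v ⟨huv, a, b, ha, hb, hab⟩
    exact ⟨huv.symm, b, a, hb, ha, by rwa [mul_comm] at hab⟩
  loopless := by constructor; rintro u ⟨h, -⟩; exact h rfl

/-- `I` is a maximal element of the family `F = {ann x : 0 ≠ x ∈ R}`. -/
def MaxAnn (R : Type*) [CommRing R] (I : Ideal R) : Prop :=
  (∃ x : R, x ≠ 0 ∧ I = ann R x) ∧
    ∀ y : R, y ≠ 0 → I ≤ ann R y → I = ann R y

section Aux

variable {R : Type*} [CommRing R]

lemma mem_ann_iff {z w : R} : z ∈ ann R w ↔ z * w = 0 := by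
  simp [ann, Ideal.mem_torsionOf_iff, smul_eq_mul]

lemma cls_eq_iff {a b : ZD R} : cls R a = cls R b ↔ ann R a.1 = ann R b.1 :=
  ⟨fun h => Quotient.exact h, fun h => Quotient.sound h⟩

lemma adj_of {a b : ZD R} (h : cls R a ≠ cls R b) (hab : a.1 * b.1 = 0) :
    (gammaE R).Adj (cls R a) (cls R b) :=
  ⟨h, a, b, rfl, rfl, hab⟩

/-- A walk of length 2 through a common annihilating element. -/
lemma walk2 (x y c : ZD R) (hxy : x.1 * y.1 ≠ 0)
    (hxc : x.1 * c.1 = 0) (hyc : y.1 * c.1 = 0) :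
    ∃ p : (gammaE R).Walk (cls R x) (cls R y), p.length ≤ 3 := by
  have hcx : cls R c ≠ cls R x := by
    intro h
    have := (cls_eq_iff.mp h) ▸ (mem_ann_iff.mpr hyc)
    exact hxy (by rw [mul_comm]; exact mem_ann_iff.mp this)
  have hcy : cls R c ≠ cls R y := by
    intro h
    have := (cls_eq_iff.mp h) ▸ (mem_ann_iff.mpr hxc)
    exact hxy (mem_ann_iff.mp this)
  exact ⟨SimpleGraph.Walk.cons (adj_of hcx.symm hxc)
      (SimpleGraph.Walk.cons (adj_of hcy (by rwa [mul_comm])) SimpleGraph.Walk.nil),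
    by simp⟩

lemma walk_le3 (x y : ZD R) :
    ∃ p : (gammaE R).Walk (cls R x) (cls R y), p.length ≤ 3 := by
  by_cases hxy : cls R x = cls R y
  · rw [hxy]; exact ⟨SimpleGraph.Walk.nil, by simp⟩
  by_cases hmul : x.1 * y.1 = 0
  · exact ⟨SimpleGraph.Walk.cons (adj_of hxy hmul) SimpleGraph.Walk.nil, by simp⟩
  obtain ⟨hx0, a, ha0, hxa⟩ := x.2
  obtain ⟨hy0, b, hb0, hyb⟩ := y.2
  set A : ZD R := ⟨a, ha0, x.1, hx0, by rw [mul_comm]; exact hxa⟩ with hA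
  set B : ZD R := ⟨b, hb0, y.1, hy0, by rw [mul_comm]; exact hyb⟩ with hB
  by_cases hab : a * b = 0
  · -- cases on coincidences of classes
    by_cases h1 : cls R A = cls R x
    · -- then x * b = 0, use walk through B
      have hxb : x.1 * b = 0 := by
        have hb : b ∈ ann R A.1 := mem_ann_iff.mpr (by rw [mul_comm]; exact hab)
        have := (cls_eq_iff.mp h1) ▸ hb
        rw [mul_comm]; exact mem_ann_iff.mp this
      exact walk2 x y B hmul hxb hyb
    by_cases h2 : cls R B = cls R y
    · have hya : y.1 * a = 0 := by
        have ha' : a ∈ ann R B.1 := mem_ann_iff.mpr hab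
        have := (cls_eq_iff.mp h2) ▸ ha'
        rw [mul_comm]; exact mem_ann_iff.mp this
      exact walk2 x y A hmul hxa hya
    by_cases h3 : cls R A = cls R B
    · have hxb : x.1 * b = 0 := by
        have hx' : x.1 ∈ ann R A.1 := mem_ann_iff.mpr hxa
        have := (cls_eq_iff.mp h3) ▸ hx'
        exact mem_ann_iff.mp this
      exact walk2 x y B hmul hxb hyb
    · exact ⟨SimpleGraph.Walk.cons (adj_of (Ne.symm h1) hxa)
        (SimpleGraph.Walk.cons (adj_of h3 hab)
          (SimpleGraph.Walk.cons (adj_of h2 (by rw [mul_comm]; exact hyb))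
            SimpleGraph.Walk.nil)), by simp⟩
  · -- a*b ≠ 0, go through c = a*b
    set c : ZD R := ⟨a * b, hab, x.1, hx0, by
      rw [mul_comm, ← mul_assoc, hxa, zero_mul]⟩ with hc
    have hxc : x.1 * c.1 = 0 := by
      show x.1 * (a * b) = 0
      rw [← mul_assoc, hxa, zero_mul]
    have hyc : y.1 * c.1 = 0 := by
      show y.1 * (a * b) = 0
      rw [mul_comm a b, ← mul_assoc, hyb, zero_mul]
    exact walk2 x y c hmul hxc hyc

end Aux

theorem stmt3 (R : Type*) [CommRing R] [IsNoetherianRing R] [Nonempty (ZD R)] :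
    (gammaE R).Connected ∧ ∀ u v : GammaEV R, (gammaE R).dist u v ≤ 3 := by
  have key : ∀ u v : GammaEV R, ∃ p : (gammaE R).Walk u v, p.length ≤ 3 := by
    intro u v
    obtain ⟨x, hx⟩ := Quotient.exists_rep u
    obtain ⟨y, hy⟩ := Quotient.exists_rep v
    subst hx; subst hy
    exact walk_le3 x y
  have : Nonempty (GammaEV R) := Nonempty.map (fun x => cls R x) ‹Nonempty (ZD R)›
  have hconn : (gammaE R).Connected :=
    SimpleGraph.Connected.mk (fun u v => ⟨(key u v).choose⟩)
  refine ⟨hconn, fun u v => ?_⟩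
  obtain ⟨p, hp⟩ := key u v
  exact le_trans (SimpleGraph.dist_le p) hp
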